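/- arXiv:2105.06076 — 2 statements merged into one kernel-verified Lean document; each statement's English description precedes it below -/
import Mathlib

section
/- The optimal success probability for minimum-error discrimination of states ρ₁,...,ρᵣ with priors q₁,...,qᵣ, defined as the supremum over all POVMs (M₁,...,Mᵣ) of ∑ᵢ qᵢ tr(ρᵢ Mᵢ), is at least max_j { q_j + (1/(r−1)) ∑ᵢ ‖(qᵢρᵢ − q_jρ_j)⁺‖₁ } for r ≥ 2. -/
open scoped ComplexOrder

/-- The operator absolute value `√(AᴴA)` of a matrix. -/
noncomputable def matAbs {n : ℕ} (A : Matrix (Fin n) (Fin n) ℂ) : Matrix (Fin n) (Fin n) ℂ :=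
  (Matrix.posSemidef_conjTranspose_mul_self A).1.eigenvectorUnitary.1 *
    Matrix.diagonal ((↑) ∘ (√·) ∘ (Matrix.posSemidef_conjTranspose_mul_self A).1.eigenvalues) *
    (star (Matrix.posSemidef_conjTranspose_mul_self A).1.eigenvectorUnitary : Matrix (Fin n) (Fin n) ℂ)

/-- The trace norm `‖A‖₁ = tr √(AᴴA)`. -/
noncomputable def traceNorm {n : ℕ} (A : Matrix (Fin n) (Fin n) ℂ) : ℝ :=
  ((matAbs A).trace).re

/-- The positive part `A⁺ = (|A| + A)/2` of a self-adjoint matrix `A`, so that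
`A = A⁺ - A⁻` with `A⁺, A⁻ ≥ 0`. -/
noncomputable def matPosPart {n : ℕ} (A : Matrix (Fin n) (Fin n) ℂ) : Matrix (Fin n) (Fin n) ℂ :=
  (2 : ℂ)⁻¹ • (matAbs A + A)

/-- A density operator: positive semidefinite with unit trace. -/
def IsDensity {n : ℕ} (ρ : Matrix (Fin n) (Fin n) ℂ) : Prop :=
  ρ.PosSemidef ∧ ρ.trace = 1

/-- A POVM with `r` outcomes: positive semidefinite effects summing to the identity. -/
def IsPOVM {n r : ℕ} (M : Fin r → Matrix (Fin n) (Fin n) ℂ) : Prop :=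
  (∀ i, (M i).PosSemidef) ∧ ∑ i, M i = 1

/-- Success probability `∑ i, q i * tr (ρ i * M i)` of a measurement. -/
noncomputable def successProb {n r : ℕ} (q : Fin r → ℝ)
    (ρ M : Fin r → Matrix (Fin n) (Fin n) ℂ) : ℝ :=
  ∑ i, q i * ((ρ i * M i).trace).re

/-- Optimal success probability under minimum-error discrimination. -/
noncomputable def optSuccess {n r : ℕ} (q : Fin r → ℝ)
    (ρ : Fin r → Matrix (Fin n) (Fin n) ℂ) : ℝ :=
  sSup {p | ∃ M, IsPOVM M ∧ p = successProb q ρ M}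

namespace Stmt5Aux

open Matrix

variable {n : ℕ}

/-- Functional calculus of a hermitian matrix along its spectral decomposition. -/
noncomputable def specFun {X : Matrix (Fin n) (Fin n) ℂ} (hX : X.IsHermitian) (f : ℝ → ℝ) :
    Matrix (Fin n) (Fin n) ℂ :=
  (hX.eigenvectorUnitary : Matrix (Fin n) (Fin n) ℂ) *
    Matrix.diagonal (fun k => (f (hX.eigenvalues k) : ℂ)) *
    star (hX.eigenvectorUnitary : Matrix (Fin n) (Fin n) ℂ)

variable {X : Matrix (Fin n) (Fin n) ℂ} (hX : X.IsHermitian) (f g : ℝ → ℝ)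

lemma specFun_mul : specFun hX f * specFun hX g = specFun hX (fun x => f x * g x) := by
  unfold specFun
  have h1 : star (hX.eigenvectorUnitary : Matrix (Fin n) (Fin n) ℂ) *
      (hX.eigenvectorUnitary : Matrix (Fin n) (Fin n) ℂ) = 1 := hX.eigenvectorUnitary.2.1
  calc _ = (hX.eigenvectorUnitary : Matrix (Fin n) (Fin n) ℂ) *
      Matrix.diagonal (fun k => (f (hX.eigenvalues k) : ℂ)) *
      (star (hX.eigenvectorUnitary : Matrix (Fin n) (Fin n) ℂ) *
       (hX.eigenvectorUnitary : Matrix (Fin n) (Fin n) ℂ)) *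
      (Matrix.diagonal (fun k => (g (hX.eigenvalues k) : ℂ)) *
       star (hX.eigenvectorUnitary : Matrix (Fin n) (Fin n) ℂ)) := by
        simp only [Matrix.mul_assoc]
    _ = _ := by
        rw [h1, Matrix.mul_one]
        rw [Matrix.mul_assoc, ← Matrix.mul_assoc (Matrix.diagonal _),
          Matrix.diagonal_mul_diagonal, ← Matrix.mul_assoc]
        norm_cast

lemma specFun_add : specFun hX f + specFun hX g = specFun hX (fun x => f x + g x) := by
  unfold specFun
  rw [← Matrix.add_mul, ← Matrix.mul_add, Matrix.diagonal_add]
  norm_cast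

lemma specFun_smul (c : ℝ) : (c : ℂ) • specFun hX f = specFun hX (fun x => c * f x) := by
  unfold specFun
  have hd : (Matrix.diagonal fun k => ((c * f (hX.eigenvalues k) : ℝ) : ℂ)) =
      (c : ℂ) • Matrix.diagonal fun k => ((f (hX.eigenvalues k) : ℝ) : ℂ) := by
    rw [← Matrix.diagonal_smul]
    funext k
    push_cast
    rfl
  simp only [hd, Matrix.smul_mul, Matrix.mul_smul]

lemma specFun_one : specFun hX (fun _ => 1) = 1 := by
  unfold specFun
  simp only [Complex.ofReal_one]
  rw [Matrix.diagonal_one, Matrix.mul_one, hX.eigenvectorUnitary.2.2]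

lemma specFun_id : specFun hX (fun x => x) = X := by
  unfold specFun
  exact (hX.spectral_theorem).symm

lemma specFun_posSemidef (hf : ∀ x, 0 ≤ f x) : (specFun hX f).PosSemidef := by
  unfold specFun
  rw [Matrix.star_eq_conjTranspose]
  exact Matrix.PosSemidef.mul_mul_conjTranspose_same
    (Matrix.posSemidef_diagonal_iff.mpr fun k => by
      simpa using Complex.zero_le_real.mpr (hf _)) _


lemma specFun_eq_cfc {Y : Matrix (Fin n) (Fin n) ℂ} (hY : Y.IsHermitian) (f : ℝ → ℝ) :
    specFun hY f = cfc f Y := by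
  rw [hY.cfc_eq, Matrix.IsHermitian.cfc, Unitary.conjStarAlgAut_apply]; rfl

lemma matAbs_eq : matAbs X = specFun hX (fun x => |x|) := by
  have h1 : matAbs X = specFun (posSemidef_conjTranspose_mul_self X).1 (fun x => √x) := rfl
  have hsa : IsSelfAdjoint X := hX
  rw [h1, specFun_eq_cfc, specFun_eq_cfc, hX.eq]
  have hXX : X * X = cfc (fun x : ℝ => x * x) X := by
    rw [cfc_mul (fun x : ℝ => x) (fun x : ℝ => x) X, cfc_id' ℝ X]
  rw [hXX, ← cfc_comp (fun x : ℝ => √x) (fun x : ℝ => x * x) X]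
  exact cfc_congr fun x _ => Real.sqrt_mul_self_eq_abs x

lemma matPosPart_eq : matPosPart X = specFun hX (fun x => 2⁻¹ * (|x| + x)) := by
  rw [matPosPart, matAbs_eq hX]
  nth_rewrite 2 [← specFun_id hX]
  rw [specFun_add]
  have h2 : (2 : ℂ)⁻¹ = ((2⁻¹ : ℝ) : ℂ) := by norm_num
  rw [h2, specFun_smul]

lemma matPosPart_posSemidef (hX : X.IsHermitian) : (matPosPart X).PosSemidef := by
  rw [matPosPart_eq hX]
  refine specFun_posSemidef hX _ fun x => ?_
  have := neg_abs_le x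
  nlinarith [abs_nonneg x]

lemma mul_posIndicator :
    X * specFun hX (fun x => if 0 < x then 1 else 0) = matPosPart X := by
  nth_rewrite 1 [← specFun_id hX]
  rw [specFun_mul, matPosPart_eq hX]
  have : (fun x : ℝ => x * if 0 < x then 1 else 0) = fun x : ℝ => 2⁻¹ * (|x| + x) := by
    funext x
    by_cases hx : 0 < x
    · rw [if_pos hx, abs_of_pos hx]; ring
    · rw [if_neg hx, abs_of_nonpos (not_lt.mp hx)]; ring
  rw [this]

/-- `matAbs` of a positive semidefinite matrix is itself. -/
lemma matAbs_of_posSemidef {A : Matrix (Fin n) (Fin n) ℂ} (hA : A.PosSemidef) :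
    matAbs A = A := by
  rw [matAbs_eq hA.1]
  conv_rhs => rw [← specFun_id hA.1]
  unfold specFun
  have : ∀ k, |hA.1.eigenvalues k| = hA.1.eigenvalues k :=
    fun k => abs_of_nonneg (hA.eigenvalues_nonneg k)
  simp only [this]

lemma traceNorm_of_posSemidef {A : Matrix (Fin n) (Fin n) ℂ} (hA : A.PosSemidef) :
    traceNorm A = A.trace.re := by
  rw [traceNorm, matAbs_of_posSemidef hA]

lemma trace_nonneg_of_posSemidef {A : Matrix (Fin n) (Fin n) ℂ} (hA : A.PosSemidef) :
    0 ≤ A.trace.re := by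
  simpa using (Complex.le_def.mp hA.trace_nonneg).1

lemma trace_mul_re_nonneg {A B : Matrix (Fin n) (Fin n) ℂ}
    (hA : A.PosSemidef) (hB : B.PosSemidef) : 0 ≤ ((A * B).trace).re := by
  set s := specFun hA.1 (fun x => √x) with hsdef
  have hs : s * s = A := by
    rw [hsdef, specFun_mul]
    conv_rhs => rw [← specFun_id hA.1]
    unfold specFun
    have : ∀ k, √(hA.1.eigenvalues k) * √(hA.1.eigenvalues k) = hA.1.eigenvalues k :=
      fun k => Real.mul_self_sqrt (hA.eigenvalues_nonneg k)
    simp only [this]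
  have hsp : s.PosSemidef := specFun_posSemidef hA.1 (fun x => √x) fun x => Real.sqrt_nonneg x
  have h1 : A * B = s * (s * B) := by
    rw [← Matrix.mul_assoc, hs]
  have h2 : (A * B).trace = (s * B * s).trace := by
    rw [h1, Matrix.trace_mul_comm, Matrix.mul_assoc]
  rw [h2]
  apply trace_nonneg_of_posSemidef
  have := hB.mul_mul_conjTranspose_same s
  rwa [hsp.1.eq] at this

lemma posSemidef_sum {ι : Type*} (s : Finset ι) (f : ι → Matrix (Fin n) (Fin n) ℂ)
    (h : ∀ i ∈ s, (f i).PosSemidef) : (∑ i ∈ s, f i).PosSemidef := by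
  classical
  induction s using Finset.induction with
  | empty => simpa using Matrix.PosSemidef.zero
  | insert _ _ hx ih =>
    rw [Finset.sum_insert hx]
    exact (h _ (Finset.mem_insert_self _ _)).add (ih fun i hi => h i (Finset.mem_insert_of_mem hi))

end Stmt5Aux

open Matrix Stmt5Aux in
theorem stmt5 {n r : ℕ} (hr : 2 ≤ r) (ρ : Fin r → Matrix (Fin n) (Fin n) ℂ)
    (q : Fin r → ℝ) (hρ : ∀ i, IsDensity (ρ i)) (hq : ∀ i, 0 < q i)
    (hq1 : ∑ i, q i = 1) :
    optSuccess q ρ ≥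
      Finset.univ.sup' (Finset.univ_nonempty_iff.mpr ⟨⟨0, by omega⟩⟩)
        (fun j => q j + (1 / ((r : ℝ) - 1)) *
          ∑ i, traceNorm (matPosPart ((q i : ℂ) • ρ i - (q j : ℂ) • ρ j))) := by
  classical
  -- the set of achievable success probabilities is bounded above by 1
  have hbdd : BddAbove {p | ∃ M, IsPOVM M ∧ p = successProb q ρ M} := by
    refine ⟨1, fun p hp => ?_⟩
    obtain ⟨M, ⟨hMpsd, hMsum⟩, rfl⟩ := hp
    calc successProb q ρ M ≤ ∑ i, q i * 1 := by
          refine Finset.sum_le_sum fun i _ => ?_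
          refine mul_le_mul_of_nonneg_left ?_ (hq i).le
          have h1 : (1 : Matrix (Fin n) (Fin n) ℂ) - M i
              = ∑ k ∈ Finset.univ.erase i, M k := by
            rw [← hMsum, ← Finset.add_sum_erase _ _ (Finset.mem_univ i)]
            abel
          have h2 : ((1 : Matrix (Fin n) (Fin n) ℂ) - M i).PosSemidef :=
            h1 ▸ posSemidef_sum _ _ fun k _ => hMpsd k
          have h3 := trace_mul_re_nonneg (hρ i).1 h2
          have h4 : (ρ i * ((1 : Matrix (Fin n) (Fin n) ℂ) - M i)).trace
              = (ρ i).trace - (ρ i * M i).trace := by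
            rw [Matrix.mul_sub, Matrix.mul_one, Matrix.trace_sub]
          rw [h4, (hρ i).2, Complex.sub_re, Complex.one_re] at h3
          linarith
      _ = 1 := by simpa using hq1
  rw [ge_iff_le, Finset.sup'_le_iff]
  intro j _
  have hr1 : (0 : ℝ) < (r : ℝ) - 1 := by
    have : (2 : ℝ) ≤ (r : ℝ) := by exact_mod_cast hr
    linarith
  set c : ℝ := 1 / ((r : ℝ) - 1) with hcdef
  have hc0 : 0 ≤ c := by positivity
  have hXh : ∀ i, ((q i : ℂ) • ρ i - (q j : ℂ) • ρ j).IsHermitian := by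
    intro i
    have h : ∀ k, ((q k : ℂ) • ρ k).IsHermitian := fun k => by
      unfold Matrix.IsHermitian
      rw [Matrix.conjTranspose_smul, (hρ k).1.1.eq]
      congr 1
      exact Complex.conj_ofReal _
    exact (h i).sub (h j)
  set ind : ℝ → ℝ := fun x => if 0 < x then 1 else 0 with hinddef
  have hind0 : ∀ x, 0 ≤ ind x := fun x => by
    simp only [hinddef]; split <;> norm_num
  have hind1 : ∀ x, ind x ≤ 1 := fun x => by
    simp only [hinddef]; split <;> norm_num
  set Pp : Fin r → Matrix (Fin n) (Fin n) ℂ := fun i => specFun (hXh i) ind with hPpdef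
  set E : Finset (Fin r) := Finset.univ.erase j with hEdef
  have hcard : E.card = r - 1 := by
    simp [hEdef, Finset.card_erase_of_mem]
  set S : Matrix (Fin n) (Fin n) ℂ := ∑ k ∈ E, (c : ℂ) • Pp k with hSdef
  have hcPp : ∀ k, (c : ℂ) • Pp k = specFun (hXh k) (fun x => c * ind x) := fun k => by
    rw [hPpdef]; exact specFun_smul _ _ _
  have hPppsd : ∀ k, ((c : ℂ) • Pp k).PosSemidef := fun k => by
    rw [hcPp k]
    exact specFun_posSemidef _ _ fun x => mul_nonneg hc0 (hind0 x)
  have hsplit : ∀ k, specFun (hXh k) (fun x => c * (1 - ind x))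
      = (c : ℂ) • 1 - (c : ℂ) • Pp k := by
    intro k
    refine eq_sub_of_add_eq ?_
    rw [hcPp k, specFun_add]
    have h : (fun x => c * (1 - ind x) + c * ind x) = fun _ : ℝ => c * 1 := by
      funext x; ring
    rw [h, ← specFun_smul, specFun_one]
  have hrc : ((r - 1 : ℕ) : ℂ) * (c : ℂ) = 1 := by
    have : ((r - 1 : ℕ) : ℝ) = (r : ℝ) - 1 := by
      have : (1 : ℕ) ≤ r := by omega
      push_cast [Nat.cast_sub this]
      ring
    rw [show ((r - 1 : ℕ) : ℂ) = (((r - 1 : ℕ) : ℝ) : ℂ) by push_cast; ring, this]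
    rw [← Complex.ofReal_mul]
    rw [hcdef]
    field_simp
    norm_num
  have hsum1 : ∑ k ∈ E, specFun (hXh k) (fun x => c * (1 - ind x)) = 1 - S := by
    rw [Finset.sum_congr rfl fun k _ => hsplit k, Finset.sum_sub_distrib,
      Finset.sum_const, hcard, hSdef]
    congr 1
    rw [← Nat.cast_smul_eq_nsmul ℂ, smul_smul, hrc, one_smul]
  set M : Fin r → Matrix (Fin n) (Fin n) ℂ :=
    fun i => if i = j then 1 - S else (c : ℂ) • Pp i with hMdef
  have hMsumE : ∑ k ∈ E, M k = S := by
    rw [hSdef]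
    refine Finset.sum_congr rfl fun k hk => ?_
    rw [hMdef]
    exact if_neg (Finset.ne_of_mem_erase hk)
  have hPOVM : IsPOVM M := by
    constructor
    · intro i
      by_cases hi : i = j
      · rw [hMdef]
        simp only [hi, if_pos rfl]
        rw [← hsum1]
        exact posSemidef_sum _ _ fun k _ => specFun_posSemidef _ _ fun x =>
          mul_nonneg hc0 (by linarith [hind1 x])
      · rw [hMdef]
        simp only [if_neg hi]
        exact hPppsd i
    · rw [← Finset.add_sum_erase _ _ (Finset.mem_univ j), ← hEdef, hMsumE]
      rw [hMdef]
      simp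
  -- trace bookkeeping
  set a : Fin r → Fin r → ℝ := fun i k => ((ρ i * Pp k).trace).re with hadef
  have htr : ∀ i k, ((ρ i * ((c : ℂ) • Pp k)).trace).re = c * a i k := by
    intro i k
    rw [Matrix.mul_smul, Matrix.trace_smul, smul_eq_mul, Complex.re_ofReal_mul]
  have hTi : ∀ i, traceNorm (matPosPart ((q i : ℂ) • ρ i - (q j : ℂ) • ρ j))
      = q i * a i i - q j * a j i := by
    intro i
    rw [traceNorm_of_posSemidef (matPosPart_posSemidef (hXh i)),
      ← mul_posIndicator (hXh i)]
    rw [Matrix.sub_mul, Matrix.smul_mul, Matrix.smul_mul, Matrix.trace_sub,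
      Matrix.trace_smul, Matrix.trace_smul, Complex.sub_re, smul_eq_mul, smul_eq_mul,
      Complex.re_ofReal_mul, Complex.re_ofReal_mul]
  have hTj : traceNorm (matPosPart ((q j : ℂ) • ρ j - (q j : ℂ) • ρ j)) = 0 := by
    rw [hTi j]; ring
  have hsumT : ∑ i, traceNorm (matPosPart ((q i : ℂ) • ρ i - (q j : ℂ) • ρ j))
      = ∑ i ∈ E, (q i * a i i - q j * a j i) := by
    rw [← Finset.add_sum_erase _ _ (Finset.mem_univ j), hTj, zero_add, ← hEdef]
    exact Finset.sum_congr rfl fun i _ => hTi i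
  -- success probability of this POVM
  have hsucc : successProb q ρ M
      = q j + c * ∑ i ∈ E, (q i * a i i - q j * a j i) := by
    unfold successProb
    rw [← Finset.add_sum_erase _ _ (Finset.mem_univ j), ← hEdef]
    have h2 : ∀ i ∈ E, q i * ((ρ i * M i).trace).re = c * (q i * a i i) := by
      intro i hi
      rw [hMdef]
      simp only [if_neg (Finset.ne_of_mem_erase hi)]
      rw [htr]
      ring
    rw [Finset.sum_congr rfl h2]
    have h3 : ((ρ j * M j).trace).re = 1 - ∑ i ∈ E, c * a j i := by
      have hMj : M j = 1 - S := by rw [hMdef]; simp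
      rw [hMj, Matrix.mul_sub, Matrix.mul_one, Matrix.trace_sub, Complex.sub_re, (hρ j).2,
        Complex.one_re]
      congr 1
      rw [hSdef, Finset.mul_sum, Matrix.trace_sum, Complex.re_sum]
      exact Finset.sum_congr rfl fun i _ => htr j i
    rw [h3]
    have h4 : c * ∑ i ∈ E, (q i * a i i - q j * a j i)
        = (∑ i ∈ E, c * (q i * a i i)) - q j * ∑ i ∈ E, c * a j i := by
      rw [Finset.mul_sum, Finset.mul_sum, ← Finset.sum_sub_distrib]
      exact Finset.sum_congr rfl fun i _ => by ring
    rw [h4]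
    ring
  -- conclude
  have hmem : q j + (1 / ((r : ℝ) - 1)) *
      ∑ i, traceNorm (matPosPart ((q i : ℂ) • ρ i - (q j : ℂ) • ρ j))
      ∈ {p | ∃ M, IsPOVM M ∧ p = successProb q ρ M} := by
    refine ⟨M, hPOVM, ?_⟩
    rw [hsucc, hsumT, ← hcdef]
  exact le_csSup hbdd hmem
end

section
/- For r ≥ 2, the optimal success probability for minimum-error discrimination satisfies the lower bound P^opt ≥ (1/r)·(1 + (1/(r−1))·∑_{1≤i<j≤r} ‖qᵢρᵢ − q_jρ_j‖₁). -/
open scoped ComplexOrder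

open Matrix
open scoped MatrixOrder

private lemma re_nonneg_of_nonneg {z : ℂ} (h : 0 ≤ z) : 0 ≤ z.re := by
  have := Complex.le_def.mp h; simpa using this.1

private lemma psd_trace_re_nonneg {m : ℕ} {A : Matrix (Fin m) (Fin m) ℂ}
    (hA : A.PosSemidef) : 0 ≤ (A.trace).re := by
  have hd : ∀ i, 0 ≤ A i i := fun i => hA.diag_nonneg
  rw [Matrix.trace, Complex.re_sum]
  exact Finset.sum_nonneg fun i _ => re_nonneg_of_nonneg (hd i)

private lemma trace_mul_re_nonneg {m : ℕ} {A B : Matrix (Fin m) (Fin m) ℂ}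
    (hA : A.PosSemidef) (hB : B.PosSemidef) : 0 ≤ ((A * B).trace).re := by
  have h1 : A * B = CFC.sqrt A * (CFC.sqrt A * B) := by
    rw [← Matrix.mul_assoc, CFC.sqrt_mul_sqrt_self A hA.nonneg]
  have h2 : ((CFC.sqrt A * B) * CFC.sqrt A).PosSemidef := by
    have := hB.mul_mul_conjTranspose_same (CFC.sqrt A)
    rwa [Matrix.IsHermitian.eq (CFC.sqrt_nonneg A).posSemidef.1] at this
  rw [h1, Matrix.trace_mul_comm]
  exact psd_trace_re_nonneg h2

private lemma posSemidef_real_smul {m : ℕ} {A : Matrix (Fin m) (Fin m) ℂ}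
    (hA : A.PosSemidef) {c : ℝ} (hc : 0 ≤ c) : (((c : ℂ)) • A).PosSemidef := by
  constructor
  · have : Matrix.conjTranspose (((c:ℂ)) • A) = ((c:ℂ)) • A := by
      rw [Matrix.conjTranspose_smul, Matrix.IsHermitian.eq hA.1]
      congr 1
      simp [Complex.star_def, Complex.conj_ofReal]
    exact this
  · intro x
    exact (hA.smul (Complex.zero_le_real.mpr hc)).2 x

private lemma helstrom {m : ℕ} (A : Matrix (Fin m) (Fin m) ℂ) (hA : A.IsHermitian) :
    ∃ P : Matrix (Fin m) (Fin m) ℂ, P.PosSemidef ∧ ((1 : Matrix (Fin m) (Fin m) ℂ) - P).PosSemidef ∧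
      ((A * P).trace).re = ((A.trace).re + traceNorm A) / 2 := by
  classical
  set U : Matrix (Fin m) (Fin m) ℂ := (hA.eigenvectorUnitary : Matrix (Fin m) (Fin m) ℂ) with hU
  set μ : Fin m → ℝ := hA.eigenvalues with hμ
  have hU1 : star U * U = 1 := Unitary.coe_star_mul_self _
  have hU2 : U * star U = 1 := Unitary.coe_mul_star_self _
  have key : ∀ d e : Fin m → ℂ,
      (U * Matrix.diagonal d * star U) * (U * Matrix.diagonal e * star U)
        = U * Matrix.diagonal (fun i => d i * e i) * star U := by
    intro d e
    have : Matrix.diagonal d * Matrix.diagonal e = Matrix.diagonal (fun i => d i * e i) :=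
      Matrix.diagonal_mul_diagonal d e
    rw [← this]
    simp only [Matrix.mul_assoc]
    rw [← Matrix.mul_assoc (star U), hU1, Matrix.one_mul]
  have traceconj : ∀ d : Fin m → ℂ, (U * Matrix.diagonal d * star U).trace = ∑ i, d i := by
    intro d
    rw [Matrix.trace_mul_cycle, hU1, Matrix.one_mul, Matrix.trace_diagonal]
  have psdconj : ∀ d : Fin m → ℂ, (∀ i, 0 ≤ d i) → (U * Matrix.diagonal d * star U).PosSemidef := by
    intro d hd
    have h := (Matrix.posSemidef_diagonal_iff.mpr hd).mul_mul_conjTranspose_same U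
    rwa [Matrix.star_eq_conjTranspose] at *
  have hspec : A = U * Matrix.diagonal (fun i => ((μ i : ℝ) : ℂ)) * star U := by
    have := hA.spectral_theorem
    exact this
  set χ : Fin m → ℂ := fun i => if 0 < μ i then 1 else 0 with hχ
  refine ⟨U * Matrix.diagonal χ * star U, psdconj χ fun i => by
      by_cases h : 0 < μ i <;> simp [hχ, h], ?_, ?_⟩
  · have h1 : (1 : Matrix (Fin m) (Fin m) ℂ) - U * Matrix.diagonal χ * star U
        = U * Matrix.diagonal (fun i => 1 - χ i) * star U := by
      have : Matrix.diagonal (fun i => (1:ℂ) - χ i)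
          = 1 - Matrix.diagonal χ := by
        rw [← Matrix.diagonal_one, Matrix.diagonal_sub]
      rw [this, Matrix.mul_sub, Matrix.mul_one, Matrix.sub_mul, hU2]
    rw [h1]
    exact psdconj _ fun i => by by_cases h : 0 < μ i <;> simp [hχ, h]
  · have habs : matAbs A = U * Matrix.diagonal (fun i => ((|μ i| : ℝ) : ℂ)) * star U := by
      have hpsd : (U * Matrix.diagonal (fun i => ((|μ i| : ℝ) : ℂ)) * star U).PosSemidef :=
        psdconj _ fun i => by positivity
      have hsq : (U * Matrix.diagonal (fun i => ((|μ i| : ℝ) : ℂ)) * star U) ^ 2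
          = Matrix.conjTranspose A * A := by
        have hfun : (fun i => ((|μ i| : ℝ) : ℂ) * ((|μ i| : ℝ) : ℂ))
            = fun i => ((μ i : ℝ) : ℂ) * ((μ i : ℝ) : ℂ) := by
          funext i
          rw [← Complex.ofReal_mul, ← Complex.ofReal_mul, abs_mul_abs_self]
        rw [pow_two, key, Matrix.IsHermitian.eq hA, hspec, key, hfun]
      have hmat : matAbs A = CFC.sqrt (Matrix.conjTranspose A * A) := by
        rw [CFC.sqrt_eq_real_sqrt _ (Matrix.posSemidef_conjTranspose_mul_self A).nonneg,
          cfcₙ_eq_cfc (hf0 := Real.sqrt_zero), (Matrix.posSemidef_conjTranspose_mul_self A).1.cfc_eq]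
        simp [matAbs, Matrix.IsHermitian.cfc, Unitary.conjStarAlgAut_apply]
      exact hmat.trans (CFC.sqrt_unique (by rw [← pow_two]; exact hsq) hpsd.nonneg)
    have htn : traceNorm A = ∑ i, |μ i| := by
      rw [traceNorm, habs, traceconj, Complex.re_sum]
      simp
    have htr : (A.trace).re = ∑ i, μ i := by
      rw [hspec, traceconj, Complex.re_sum]
      simp
    have hAP : ((A * (U * Matrix.diagonal χ * star U)).trace).re
        = ∑ i, (if 0 < μ i then μ i else 0) := by
      nth_rewrite 1 [hspec]
      rw [key, traceconj, Complex.re_sum]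
      refine Finset.sum_congr rfl fun i _ => ?_
      by_cases h : 0 < μ i <;> simp [hχ, h]
    rw [hAP, htn, htr, ← Finset.sum_add_distrib, Finset.sum_div]
    refine Finset.sum_congr rfl fun i _ => ?_
    by_cases h : 0 < μ i
    · rw [if_pos h, abs_of_pos h]; ring
    · rw [if_neg h, abs_of_nonpos (not_lt.mp h)]; ring

private lemma helstrom_pair {m : ℕ} (ρ₁ ρ₂ : Matrix (Fin m) (Fin m) ℂ) (q₁ q₂ : ℝ)
    (h₁ : IsDensity ρ₁) (h₂ : IsDensity ρ₂) :
    ∃ P : Matrix (Fin m) (Fin m) ℂ, P.PosSemidef ∧ ((1 : Matrix (Fin m) (Fin m) ℂ) - P).PosSemidef ∧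
      q₁ * ((ρ₁ * P).trace).re + q₂ * ((ρ₂ * ((1 : Matrix (Fin m) (Fin m) ℂ) - P)).trace).re
        = (q₁ + q₂ + traceNorm ((q₁ : ℂ) • ρ₁ - (q₂ : ℂ) • ρ₂)) / 2 := by
  set A : Matrix (Fin m) (Fin m) ℂ := (q₁ : ℂ) • ρ₁ - (q₂ : ℂ) • ρ₂ with hAdef
  have hA : A.IsHermitian := by
    have : Matrix.conjTranspose A = A := by
      rw [hAdef, Matrix.conjTranspose_sub, Matrix.conjTranspose_smul,
        Matrix.conjTranspose_smul, Matrix.IsHermitian.eq h₁.1.1, Matrix.IsHermitian.eq h₂.1.1]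
      simp [Complex.star_def, Complex.conj_ofReal]
    exact this
  obtain ⟨P, hP1, hP2, hP3⟩ := helstrom A hA
  refine ⟨P, hP1, hP2, ?_⟩
  have htrA : (A.trace).re = q₁ - q₂ := by
    rw [hAdef, Matrix.trace_sub, Matrix.trace_smul, Matrix.trace_smul, h₁.2, h₂.2]
    simp
  have hAP : ((A * P).trace).re = q₁ * ((ρ₁ * P).trace).re - q₂ * ((ρ₂ * P).trace).re := by
    rw [hAdef, Matrix.sub_mul, Matrix.smul_mul, Matrix.smul_mul, Matrix.trace_sub,
      Matrix.trace_smul, Matrix.trace_smul]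
    simp [Complex.re_ofReal_mul]
  have h2P : ((ρ₂ * ((1 : Matrix (Fin m) (Fin m) ℂ) - P)).trace).re
      = 1 - ((ρ₂ * P).trace).re := by
    rw [Matrix.mul_sub, Matrix.mul_one, Matrix.trace_sub, Complex.sub_re, h₂.2]
    simp
  rw [h2P]
  have hkey : q₁ * ((ρ₁ * P).trace).re - q₂ * ((ρ₂ * P).trace).re
      = ((q₁ - q₂) + traceNorm A) / 2 := by
    rw [← hAP, hP3, htrA]
  linarith [hkey]

private lemma sum_pairs {r : ℕ} (q : Fin r → ℝ) :
    ∑ p ∈ Finset.univ.filter (fun p : Fin r × Fin r => p.1 < p.2), (q p.1 + q p.2)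
      = ((r : ℝ) - 1) * ∑ i, q i := by
  classical
  rw [Finset.sum_filter, Fintype.sum_prod_type]
  have hswap : ∑ i : Fin r, ∑ j : Fin r, (if i < j then q i + q j else 0)
      = ∑ i : Fin r, ∑ j : Fin r, (if j < i then q j + q i else 0) := by rw [Finset.sum_comm]
  have key : ∀ i j : Fin r, ((if i < j then q i + q j else 0) + (if j < i then q j + q i else 0))
      = (q i + q j) - (if i = j then q i + q j else 0) := by
    intro i j
    rcases lt_trichotomy i j with h | h | h
    · rw [if_pos h, if_neg (asymm h), if_neg h.ne]; ring
    · subst h; simp [lt_irrefl]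
    · rw [if_neg (asymm h), if_pos h, if_neg h.ne']; ring
  have h2 : (∑ i : Fin r, ∑ j : Fin r, (if i < j then q i + q j else 0)) * 2
      = ∑ i : Fin r, ∑ j : Fin r, ((q i + q j) - (if i = j then q i + q j else 0)) := by
    rw [mul_two]
    nth_rewrite 2 [hswap]
    rw [← Finset.sum_add_distrib]
    refine Finset.sum_congr rfl fun i _ => ?_
    rw [← Finset.sum_add_distrib]
    exact Finset.sum_congr rfl fun j _ => key i j
  have h3 : ∑ i : Fin r, ∑ j : Fin r, ((q i + q j) - (if i = j then q i + q j else 0))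
      = 2 * ((r : ℝ) - 1) * ∑ i, q i := by
    have hinner : ∀ i : Fin r, ∑ j : Fin r, ((q i + q j) - (if i = j then q i + q j else 0))
        = (r : ℝ) * q i + (∑ j, q j) - 2 * q i := by
      intro i
      rw [Finset.sum_sub_distrib, Finset.sum_add_distrib, Finset.sum_const, Finset.sum_ite_eq]
      simp [Finset.card_univ, nsmul_eq_mul]
      ring
    rw [Finset.sum_congr rfl fun i _ => hinner i]
    rw [Finset.sum_sub_distrib, Finset.sum_add_distrib, ← Finset.mul_sum, ← Finset.mul_sum,
      Finset.sum_const, Finset.card_univ, Fintype.card_fin, nsmul_eq_mul]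
    ring
  rw [h3] at h2
  linarith [h2]

private lemma card_pairs (r : ℕ) :
    ((Finset.univ.filter (fun p : Fin r × Fin r => p.1 < p.2)).card : ℝ) * 2
      = (r : ℝ) * ((r : ℝ) - 1) := by
  have h := sum_pairs (fun _ : Fin r => (1 : ℝ))
  simp only [Finset.sum_const, Finset.card_univ, Fintype.card_fin, nsmul_eq_mul, mul_one] at h
  -- h : ∑ p in S, (1+1) = (r-1) * r
  rw [show ((1:ℝ) + 1) = 2 from by norm_num] at h
  rw [h]
  ring

private lemma bddAbove_success {n r : ℕ} (q : Fin r → ℝ) (ρ : Fin r → Matrix (Fin n) (Fin n) ℂ)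
    (hρ : ∀ i, IsDensity (ρ i)) (hq : ∀ i, 0 < q i) (hq1 : ∑ i, q i = 1) :
    BddAbove {p | ∃ M, IsPOVM M ∧ p = successProb q ρ M} := by
  refine ⟨1, fun x hx => ?_⟩
  obtain ⟨M, hM, rfl⟩ := hx
  have hterm : ∀ i, ((ρ i * M i).trace).re ≤ 1 := by
    intro i
    have hsum : ∑ j, ((ρ i * M j).trace).re = 1 := by
      have h0 : ∑ j, (ρ i * M j).trace = (ρ i).trace := by
        rw [← Matrix.trace_sum, ← Matrix.mul_sum, hM.2, Matrix.mul_one]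
      calc ∑ j, ((ρ i * M j).trace).re = (∑ j, (ρ i * M j).trace).re := (Complex.re_sum _ _).symm
        _ = ((ρ i).trace).re := by rw [h0]
        _ = 1 := by rw [(hρ i).2]; simp
    calc ((ρ i * M i).trace).re ≤ ∑ j, ((ρ i * M j).trace).re :=
          Finset.single_le_sum (fun j _ => trace_mul_re_nonneg (hρ i).1 (hM.1 j))
            (Finset.mem_univ i)
      _ = 1 := hsum
  show ∑ i, q i * ((ρ i * M i).trace).re ≤ 1
  calc ∑ i, q i * ((ρ i * M i).trace).re ≤ ∑ i, q i * 1 :=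
        Finset.sum_le_sum fun i _ => mul_le_mul_of_nonneg_left (hterm i) (hq i).le
    _ = 1 := by simp [hq1]

theorem stmt7 {n r : ℕ} (hr : 2 ≤ r) (ρ : Fin r → Matrix (Fin n) (Fin n) ℂ)
    (q : Fin r → ℝ) (hρ : ∀ i, IsDensity (ρ i)) (hq : ∀ i, 0 < q i)
    (hq1 : ∑ i, q i = 1) :
    optSuccess q ρ ≥
      (1 / (r : ℝ)) * (1 + (1 / ((r : ℝ) - 1)) *
        ∑ p ∈ Finset.univ.filter (fun p : Fin r × Fin r => p.1 < p.2),
            traceNorm ((q p.1 : ℂ) • ρ p.1 - (q p.2 : ℂ) • ρ p.2)) := by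
  classical
  have hr2 : (2 : ℝ) ≤ (r : ℝ) := by exact_mod_cast hr
  have hr1 : (0 : ℝ) < (r : ℝ) - 1 := by linarith
  have hr0 : (0 : ℝ) < (r : ℝ) := by linarith
  set S := Finset.univ.filter (fun p : Fin r × Fin r => p.1 < p.2) with hS
  have hchoice : ∀ p : Fin r × Fin r, ∃ P : Matrix (Fin n) (Fin n) ℂ,
      P.PosSemidef ∧ ((1 : Matrix (Fin n) (Fin n) ℂ) - P).PosSemidef ∧
      q p.1 * ((ρ p.1 * P).trace).re
        + q p.2 * ((ρ p.2 * ((1 : Matrix (Fin n) (Fin n) ℂ) - P)).trace).re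
        = (q p.1 + q p.2 + traceNorm ((q p.1 : ℂ) • ρ p.1 - (q p.2 : ℂ) • ρ p.2)) / 2 :=
    fun p => helstrom_pair _ _ _ _ (hρ p.1) (hρ p.2)
  choose P hP1 hP2 hP3 using hchoice
  set c : ℝ := 2 / ((r : ℝ) * ((r : ℝ) - 1)) with hc
  have hc0 : 0 ≤ c := le_of_lt (div_pos two_pos (mul_pos hr0 hr1))
  set M : Fin r → Matrix (Fin n) (Fin n) ℂ := fun k =>
    ((c : ℂ)) • ∑ p ∈ S, ((if p.1 = k then P p else 0) +
      (if p.2 = k then (1 : Matrix (Fin n) (Fin n) ℂ) - P p else 0)) with hM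
  have hMpsd : ∀ k, (M k).PosSemidef := by
    intro k
    apply posSemidef_real_smul _ hc0
    refine Finset.sum_induction _ Matrix.PosSemidef
      (fun a b ha hb => ha.add hb) Matrix.PosSemidef.zero (fun p _ => ?_)
    apply Matrix.PosSemidef.add
    · split_ifs with h; exacts [hP1 p, Matrix.PosSemidef.zero]
    · split_ifs with h; exacts [hP2 p, Matrix.PosSemidef.zero]
  have hcard : ((S.card : ℝ)) * 2 = (r : ℝ) * ((r : ℝ) - 1) := by
    rw [hS]; exact card_pairs r
  have hc1 : c * (S.card : ℝ) = 1 := by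
    rw [hc]
    field_simp
    linarith [hcard]
  have hMsum : ∑ k, M k = 1 := by
    calc ∑ k, M k = ((c : ℂ)) • ∑ k, ∑ p ∈ S, ((if p.1 = k then P p else 0) +
          (if p.2 = k then (1 : Matrix (Fin n) (Fin n) ℂ) - P p else 0)) := by
          rw [← Finset.smul_sum]
      _ = ((c : ℂ)) • ∑ p ∈ S, ∑ k, ((if p.1 = k then P p else 0) +
          (if p.2 = k then (1 : Matrix (Fin n) (Fin n) ℂ) - P p else 0)) := by
          rw [Finset.sum_comm]
      _ = ((c : ℂ)) • ∑ p ∈ S, (1 : Matrix (Fin n) (Fin n) ℂ) := by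
          congr 1
          refine Finset.sum_congr rfl fun p _ => ?_
          rw [Finset.sum_add_distrib, Finset.sum_ite_eq, Finset.sum_ite_eq]
          simp
      _ = 1 := by
          rw [Finset.sum_const, ← Nat.cast_smul_eq_nsmul ℂ, smul_smul]
          have hone : (c : ℂ) * (S.card : ℂ) = 1 := by
            rw [← Complex.ofReal_natCast, ← Complex.ofReal_mul, hc1, Complex.ofReal_one]
          rw [hone, one_smul]
  have hk : ∀ k, q k * ((ρ k * M k).trace).re
      = c * ∑ p ∈ S, ((if p.1 = k then q p.1 * ((ρ p.1 * P p).trace).re else 0)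
        + (if p.2 = k then
            q p.2 * ((ρ p.2 * ((1 : Matrix (Fin n) (Fin n) ℂ) - P p)).trace).re else 0)) := by
    intro k
    have h1 : ρ k * M k = ((c : ℂ)) • ∑ p ∈ S,
        ((if p.1 = k then ρ k * P p else 0)
          + (if p.2 = k then ρ k * ((1 : Matrix (Fin n) (Fin n) ℂ) - P p) else 0)) := by
      show ρ k * (((c : ℂ)) • ∑ p ∈ S, _) = _
      rw [Matrix.mul_smul, Matrix.mul_sum]
      congr 1
      refine Finset.sum_congr rfl fun p _ => ?_
      rw [Matrix.mul_add]
      congr 1 <;> split_ifs <;> simp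
    have h2 : ∀ p ∈ S, q k * ((((if p.1 = k then ρ k * P p else 0)
          + (if p.2 = k then ρ k * ((1 : Matrix (Fin n) (Fin n) ℂ) - P p) else 0)).trace).re)
        = (if p.1 = k then q p.1 * ((ρ p.1 * P p).trace).re else 0)
          + (if p.2 = k then
              q p.2 * ((ρ p.2 * ((1 : Matrix (Fin n) (Fin n) ℂ) - P p)).trace).re else 0) := by
      intro p _
      rw [Matrix.trace_add, Complex.add_re, mul_add]
      congr 1
      · split_ifs with h
        · subst h; rfl
        · simp
      · split_ifs with h
        · subst h; rfl
        · simp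
    calc q k * ((ρ k * M k).trace).re
        = q k * (c * ∑ p ∈ S, ((((if p.1 = k then ρ k * P p else 0)
            + (if p.2 = k then ρ k * ((1 : Matrix (Fin n) (Fin n) ℂ) - P p) else 0)).trace).re)) := by
          rw [h1, Matrix.trace_smul, smul_eq_mul, Complex.re_ofReal_mul, Matrix.trace_sum,
            Complex.re_sum]
      _ = c * ∑ p ∈ S, q k * ((((if p.1 = k then ρ k * P p else 0)
            + (if p.2 = k then ρ k * ((1 : Matrix (Fin n) (Fin n) ℂ) - P p) else 0)).trace).re) := by
          rw [Finset.mul_sum, Finset.mul_sum, Finset.mul_sum]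
          exact Finset.sum_congr rfl fun p _ => by ring
      _ = c * ∑ p ∈ S, ((if p.1 = k then q p.1 * ((ρ p.1 * P p).trace).re else 0)
          + (if p.2 = k then
              q p.2 * ((ρ p.2 * ((1 : Matrix (Fin n) (Fin n) ℂ) - P p)).trace).re else 0)) := by
          rw [Finset.sum_congr rfl h2]
  have hval : successProb q ρ M
      = c * ∑ p ∈ S, (q p.1 + q p.2
          + traceNorm ((q p.1 : ℂ) • ρ p.1 - (q p.2 : ℂ) • ρ p.2)) / 2 := by
    show ∑ k, q k * ((ρ k * M k).trace).re = _
    rw [Finset.sum_congr rfl fun k _ => hk k, ← Finset.mul_sum, Finset.sum_comm]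
    congr 1
    refine Finset.sum_congr rfl fun p _ => ?_
    rw [Finset.sum_add_distrib, Finset.sum_ite_eq, Finset.sum_ite_eq]
    simp only [Finset.mem_univ, if_true]
    exact hP3 p
  have hsp := sum_pairs q
  rw [hq1, mul_one, ← hS] at hsp
  have hfinal : successProb q ρ M
      = (1 / (r : ℝ)) * (1 + (1 / ((r : ℝ) - 1)) * ∑ p ∈ S,
          traceNorm ((q p.1 : ℂ) • ρ p.1 - (q p.2 : ℂ) • ρ p.2)) := by
    rw [hval, ← Finset.sum_div, Finset.sum_add_distrib, hsp, hc]
    field_simp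
  have hopt : successProb q ρ M ≤ optSuccess q ρ :=
    le_csSup (bddAbove_success q ρ hρ hq hq1) ⟨M, ⟨hMpsd, hMsum⟩, rfl⟩
  rw [ge_iff_le, ← hfinal]
  exact hopt
end
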